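/- arXiv:2310.13866 — 3 statements merged into one kernel-verified Lean document; each statement's English description precedes it below -/
import Mathlib

section
/- Let β̃ > 0, γ̃ > 0, μ > 0, ρ̃ > 0 and set β = μβ̃, γ = γ̃ + β̃, ρ = ρ̃. Suppose S, I : ℝ → ℝ are differentiable on [0, T] and solve the classical SIR system S' = -β S I, I' = β S I - γ I with S(0) = 1, I(0) = ρ, and suppose x_S, x_D : ℝ → ℝ are differentiable on [0, T] and solve the Poisson-network SIR system x_S' = -β̃ x_D x_S, x_D' = β̃ μ x_D x_S - (β̃+γ̃) x_D with x_S(0) = 1, x_D(0) = μρ̃. Assume S, I, x_S, x_D are continuous on [0, T] and remain in a fixed bounded region where the right-hand sides are Lipschitz (e.g., all four functions take values in [0, K] for some K). Then S(t) = x_S(t) and I(t) = x_D(t)/μ for all t ∈ [0, T]. -/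
open Set

lemma sir_prod_lip (a1 a2 b1 b2 B : ℝ) (ha1 : |a1| ≤ B) (hb2 : |b2| ≤ B) :
    |a1 * a2 - b1 * b2| ≤ B * |a2 - b2| + B * |a1 - b1| := by
  have h : a1 * a2 - b1 * b2 = a1 * (a2 - b2) + (a1 - b1) * b2 := by ring
  rw [h]
  calc |a1 * (a2 - b2) + (a1 - b1) * b2| ≤ |a1 * (a2 - b2)| + |(a1 - b1) * b2| := abs_add_le _ _
    _ = |a1| * |a2 - b2| + |a1 - b1| * |b2| := by rw [abs_mul, abs_mul]
    _ ≤ B * |a2 - b2| + B * |a1 - b1| := by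
        have h1 : (0:ℝ) ≤ |a2 - b2| := abs_nonneg _
        have h2 : (0:ℝ) ≤ |a1 - b1| := abs_nonneg _
        have h3 : (0:ℝ) ≤ |a1| := abs_nonneg _
        nlinarith

set_option maxHeartbeats 1000000 in
/-- Under the parameter matching `β = μβ̃`, `γ = γ̃ + β̃`, `ρ = ρ̃`, the classical
SIR solution and the Poisson-network SIR solution satisfy `S = x_S` and
`I = x_D / μ` on `[0, T]` (uniqueness of solutions, assuming the solutions stay
in a bounded region `[0, K]`). -/
theorem classical_eq_network_sir
    (βt γt μ ρt T : ℝ) (hβt : 0 < βt) (hγt : 0 < γt) (hμ : 0 < μ) (hρt : 0 < ρt)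
    (hT : 0 ≤ T)
    (β γ ρ : ℝ) (hβdef : β = μ * βt) (hγdef : γ = γt + βt) (hρdef : ρ = ρt)
    (S I xS xD : ℝ → ℝ)
    (hS : ∀ t ∈ Set.Icc (0:ℝ) T, HasDerivAt S (-β * S t * I t) t)
    (hI : ∀ t ∈ Set.Icc (0:ℝ) T, HasDerivAt I (β * S t * I t - γ * I t) t)
    (hS0 : S 0 = 1) (hI0 : I 0 = ρ)
    (hxS : ∀ t ∈ Set.Icc (0:ℝ) T, HasDerivAt xS (-βt * xD t * xS t) t)
    (hxD : ∀ t ∈ Set.Icc (0:ℝ) T,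
      HasDerivAt xD (βt * μ * xD t * xS t - (βt + γt) * xD t) t)
    (hxS0 : xS 0 = 1) (hxD0 : xD 0 = μ * ρt)
    (hScont : ContinuousOn S (Set.Icc 0 T))
    (hIcont : ContinuousOn I (Set.Icc 0 T))
    (hxScont : ContinuousOn xS (Set.Icc 0 T))
    (hxDcont : ContinuousOn xD (Set.Icc 0 T))
    (K : ℝ)
    (hbound : ∀ t ∈ Set.Icc (0:ℝ) T,
      S t ∈ Set.Icc (0:ℝ) K ∧ I t ∈ Set.Icc (0:ℝ) K ∧
      xS t ∈ Set.Icc (0:ℝ) K ∧ xD t ∈ Set.Icc (0:ℝ) K) :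
    ∀ t ∈ Set.Icc (0:ℝ) T, S t = xS t ∧ I t = xD t / μ := by
  -- Basic facts
  have hβ : 0 < β := by rw [hβdef]; positivity
  have hγ : 0 < γ := by rw [hγdef]; positivity
  have hK : 0 ≤ K := by
    have := (hbound 0 ⟨le_refl 0, hT⟩).1
    exact le_trans this.1 this.2
  -- Bound for second component of network solution
  set B : ℝ := K + K / μ with hBdef
  have hKB : K ≤ B := by
    have h : 0 ≤ K / μ := by positivity
    rw [hBdef]; linarith
  have hKμB : K / μ ≤ B := by rw [hBdef]; linarith
  have hB : 0 ≤ B := le_trans hK hKB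
  -- The vector field
  set v : ℝ → ℝ × ℝ → ℝ × ℝ :=
    fun _ p => (-β * p.1 * p.2, β * p.1 * p.2 - γ * p.2) with hvdef
  set s : ℝ → Set (ℝ × ℝ) := fun _ => Icc (0:ℝ) B ×ˢ Icc (0:ℝ) B with hsdef
  set L : NNReal := ⟨2 * β * B + γ, by positivity⟩ with hLdef
  have hlip : ∀ t, LipschitzOnWith L (v t) (s t) := by
    intro t
    rw [lipschitzOnWith_iff_dist_le_mul]
    rintro ⟨a1, a2⟩ ⟨ha1, ha2⟩ ⟨b1, b2⟩ ⟨hb1, hb2⟩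
    simp only [hsdef, mem_prod, mem_Icc] at ha1 ha2 hb1 hb2
    have hd1 : dist a1 b1 ≤ dist (a1, a2) (b1, b2) := by
      rw [Prod.dist_eq]; exact le_max_left _ _
    have hd2 : dist a2 b2 ≤ dist (a1, a2) (b1, b2) := by
      rw [Prod.dist_eq]; exact le_max_right _ _
    have hA1 : |a1| ≤ B := abs_le.mpr ⟨by linarith [ha1.1, ha1.2], ha1.2⟩
    have hB2 : |b2| ≤ B := abs_le.mpr ⟨by linarith [hb2.1, hb2.2], hb2.2⟩
    have hkey := sir_prod_lip a1 a2 b1 b2 B hA1 hB2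
    have hd0 : 0 ≤ dist (a1, a2) (b1, b2) := dist_nonneg
    rw [Real.dist_eq] at hd1
    rw [Real.dist_eq] at hd2
    simp only [hvdef]
    rw [Prod.dist_eq, Real.dist_eq, Real.dist_eq]
    have hL : (L : ℝ) = 2 * β * B + γ := rfl
    set d : ℝ := dist (a1, a2) (b1, b2) with hddef
    have e1 : β * B * |a2 - b2| ≤ β * B * d :=
      mul_le_mul_of_nonneg_left hd2 (by positivity)
    have e2 : β * B * |a1 - b1| ≤ β * B * d :=
      mul_le_mul_of_nonneg_left hd1 (by positivity)
    have e3 : γ * |a2 - b2| ≤ γ * d := mul_le_mul_of_nonneg_left hd2 hγ.le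
    have e4 : β * |a1 * a2 - b1 * b2| ≤ β * (B * |a2 - b2| + B * |a1 - b1|) :=
      mul_le_mul_of_nonneg_left hkey hβ.le
    have e5 : 0 ≤ γ * d := by positivity
    apply max_le
    · have h1 : -β * a1 * a2 - -β * b1 * b2 = -(β * (a1 * a2 - b1 * b2)) := by ring
      rw [h1, abs_neg, abs_mul, abs_of_pos hβ, hL]
      linarith [e1, e2, e4, e5]
    · have h1 : β * a1 * a2 - γ * a2 - (β * b1 * b2 - γ * b2)
          = β * (a1 * a2 - b1 * b2) - γ * (a2 - b2) := by ring
      rw [h1, hL]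
      calc |β * (a1 * a2 - b1 * b2) - γ * (a2 - b2)|
          ≤ |β * (a1 * a2 - b1 * b2)| + |γ * (a2 - b2)| := abs_sub _ _
        _ = β * |a1 * a2 - b1 * b2| + γ * |a2 - b2| := by
            rw [abs_mul, abs_mul, abs_of_pos hβ, abs_of_pos hγ]
        _ ≤ (2 * β * B + γ) * d := by linarith [e1, e2, e3, e4]
  -- Curves
  set f : ℝ → ℝ × ℝ := fun t => (S t, I t) with hfdef
  set g : ℝ → ℝ × ℝ := fun t => (xS t, xD t / μ) with hgdef
  have hfc : ContinuousOn f (Icc 0 T) := hScont.prodMk hIcont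
  have hgc : ContinuousOn g (Icc 0 T) := hxScont.prodMk (hxDcont.div_const μ)
  have hf' : ∀ t ∈ Ico (0:ℝ) T, HasDerivWithinAt f (v t (f t)) (Ici t) t := by
    intro t ht
    have htI : t ∈ Icc (0:ℝ) T := ⟨ht.1, ht.2.le⟩
    exact (((hS t htI).prodMk (hI t htI)).hasDerivWithinAt)
  have hg' : ∀ t ∈ Ico (0:ℝ) T, HasDerivWithinAt g (v t (g t)) (Ici t) t := by
    intro t ht
    have htI : t ∈ Icc (0:ℝ) T := ⟨ht.1, ht.2.le⟩
    have h1 : HasDerivAt xS (-β * (xS t) * (xD t / μ)) t := by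
      convert hxS t htI using 1
      field_simp [hβdef]; rw [hβdef]; ring
    have h2 : HasDerivAt (fun u => xD u / μ)
        (β * (xS t) * (xD t / μ) - γ * (xD t / μ)) t := by
      have := (hxD t htI).div_const μ
      exact this.congr_deriv (by rw [hβdef, hγdef]; field_simp; ring)
    exact ((h1.prodMk h2).hasDerivWithinAt)
  have hfs : ∀ t ∈ Ico (0:ℝ) T, f t ∈ s t := by
    intro t ht
    have htI : t ∈ Icc (0:ℝ) T := ⟨ht.1, ht.2.le⟩
    obtain ⟨h1, h2, _, _⟩ := hbound t htI
    exact ⟨⟨h1.1, h1.2.trans hKB⟩, ⟨h2.1, h2.2.trans hKB⟩⟩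
  have hgs : ∀ t ∈ Ico (0:ℝ) T, g t ∈ s t := by
    intro t ht
    have htI : t ∈ Icc (0:ℝ) T := ⟨ht.1, ht.2.le⟩
    obtain ⟨_, _, h3, h4⟩ := hbound t htI
    refine ⟨⟨h3.1, h3.2.trans hKB⟩, ⟨div_nonneg h4.1 hμ.le, ?_⟩⟩
    calc xD t / μ ≤ K / μ := by gcongr; exact h4.2
      _ ≤ B := hKμB
  -- initial condition
  have h0 : f 0 = g 0 := by
    simp only [hfdef, hgdef, hS0, hI0, hxS0, hxD0, hρdef]
    have hh : μ * ρt / μ = ρt := by field_simp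
    rw [hh]
  have heq := ODE_solution_unique_of_mem_Icc_right (fun t _ => hlip t) hfc hf' hfs hgc hg' hgs h0
  intro t ht
  have := heq ht
  simp only [hfdef, hgdef, Prod.mk.injEq] at this
  exact this
end

section
/- Let μ > 0, β̃ > 0, γ̃ > 0, ρ̃ > 0, ρ > 0, β > 0 and let R₀N = μβ̃/(β̃+γ̃), R₀M > 0. If the two epidemic-curve right-hand sides coincide as functions of the susceptible fraction, i.e. μβ̃ (1 + ρ̃ - s - ln(s)/R₀N) s = β (1 + ρ - s - ln(s)/R₀M) s for every s ∈ (0, 1], then necessarily β = μβ̃, ρ = ρ̃, and R₀M = R₀N. -/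
/-- If the network and mass-action epidemic-curve right-hand sides coincide as
functions of the susceptible fraction on `(0, 1]`, then necessarily `β = μβ̃`,
`ρ = ρ̃`, and `R₀^MA = R₀^NET`. -/
theorem epidemic_curve_coincide_only_if
    (μ βt γt ρt ρ β : ℝ) (hμ : 0 < μ) (hβt : 0 < βt) (hγt : 0 < γt)
    (hρt : 0 < ρt) (hρ : 0 < ρ) (hβ : 0 < β)
    (R₀N R₀M : ℝ) (hR₀N : R₀N = μ * βt / (βt + γt)) (hR₀M : 0 < R₀M)
    (heq : ∀ s ∈ Set.Ioc (0:ℝ) 1,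
      μ * βt * (1 + ρt - s - Real.log s / R₀N) * s
        = β * (1 + ρ - s - Real.log s / R₀M) * s) :
    β = μ * βt ∧ ρ = ρt ∧ R₀M = R₀N := by
  have hA : 0 < μ * βt := by positivity
  have hN : 0 < R₀N := by rw [hR₀N]; positivity
  have hL : (0:ℝ) < Real.log 2 := Real.log_pos (by norm_num)
  have h1 := heq 1 ⟨by norm_num, by norm_num⟩
  have h2 := heq (1/2) ⟨by norm_num, by norm_num⟩
  have h3 := heq (1/4) ⟨by norm_num, by norm_num⟩
  rw [Real.log_one] at h1
  rw [one_div, Real.log_inv] at h2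
  have hlog4 : Real.log ((1:ℝ)/4) = -(2 * Real.log 2) := by
    rw [one_div, Real.log_inv, show (4:ℝ) = 2^2 by norm_num, Real.log_pow]
    push_cast; ring
  rw [hlog4] at h3
  have hAB : β = μ * βt := by linear_combination 4*h1 + 16*h3 - 16*h2
  have hρρ : ρ = ρt := by
    have h1' : μ * βt * ρt = μ * βt * ρ := by
      rw [hAB] at h1; linear_combination h1
    have := mul_left_cancel₀ hA.ne' h1'
    exact this.symm
  have hMN : R₀M = R₀N := by
    rw [hAB, hρρ] at h2
    have key : μ * βt * (Real.log 2 / R₀N) = μ * βt * (Real.log 2 / R₀M) := by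
      linear_combination 2*h2
    have h4 := mul_left_cancel₀ hA.ne' key
    rw [div_eq_div_iff hN.ne' hR₀M.ne'] at h4
    exact mul_left_cancel₀ hL.ne' h4
  exact ⟨hAB, hρρ, hMN⟩
end

section
/- Let β̃ > 0, γ̃ > 0, μ > 0, ρ > 0. Suppose x_S, x_D, x_I : ℝ → ℝ are differentiable on [0, T] and satisfy x_S' = -β̃ x_D x_S, x_D' = β̃ μ x_D x_S - (β̃+γ̃) x_D, and x_I' = β̃ x_D x_S - γ̃ x_I on [0, T], with x_D(0) = μρ, x_I(0) = ρ, and x_D(t) ≥ 0 for all t ∈ [0, T]. Define I(t) = x_D(t)/μ (the matched mass-action infected proportion). Then I(t) ≤ x_I(t) for all t ∈ [0, T]; that is, the classical SIR infected curve never exceeds the true network infected proportion. -/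
/-- The matched mass-action infected proportion `I = x_D/μ` never exceeds the
true network infected proportion `x_I`. -/
theorem matched_infected_le_network
    (βt γt μ ρ T : ℝ) (hβt : 0 < βt) (hγt : 0 < γt) (hμ : 0 < μ) (hρ : 0 < ρ)
    (hT : 0 ≤ T)
    (xS xD xI : ℝ → ℝ)
    (hxS : ∀ t ∈ Set.Icc (0:ℝ) T, HasDerivAt xS (-βt * xD t * xS t) t)
    (hxD : ∀ t ∈ Set.Icc (0:ℝ) T,
      HasDerivAt xD (βt * μ * xD t * xS t - (βt + γt) * xD t) t)
    (hxI : ∀ t ∈ Set.Icc (0:ℝ) T,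
      HasDerivAt xI (βt * xD t * xS t - γt * xI t) t)
    (hxD0 : xD 0 = μ * ρ) (hxI0 : xI 0 = ρ)
    (hxDpos : ∀ t ∈ Set.Icc (0:ℝ) T, 0 ≤ xD t) :
    ∀ t ∈ Set.Icc (0:ℝ) T, xD t / μ ≤ xI t := by
  -- Consider g s = exp(γt s) * (xI s - xD s / μ); g' ≥ 0 and g 0 = 0.
  set g : ℝ → ℝ := fun s => Real.exp (γt * s) * (xI s - xD s / μ) with hg
  have key : ∀ s ∈ Set.Icc (0:ℝ) T,
      HasDerivAt g (Real.exp (γt * s) * (βt * xD s / μ)) s := by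
    intro s hs
    have he : HasDerivAt (fun s : ℝ => Real.exp (γt * s))
        (Real.exp (γt * s) * γt) s := by
      have := ((hasDerivAt_id s).const_mul γt).exp
      simpa using this
    have hd : HasDerivAt (fun s => xI s - xD s / μ)
        ((βt * xD s * xS s - γt * xI s)
          - (βt * μ * xD s * xS s - (βt + γt) * xD s) / μ) s :=
      (hxI s hs).sub ((hxD s hs).div_const μ)
    have := he.mul hd
    refine this.congr_deriv ?_
    field_simp
    ring
  have hcont : ContinuousOn g (Set.Icc 0 T) := fun s hs =>
    (key s hs).continuousAt.continuousWithinAt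
  have hmono : MonotoneOn g (Set.Icc 0 T) := by
    apply monotoneOn_of_deriv_nonneg (convex_Icc 0 T) hcont
    · intro s hs
      rw [interior_Icc] at hs
      exact (key s (Set.mem_Icc_of_Ioo hs)).differentiableAt.differentiableWithinAt
    · intro s hs
      rw [interior_Icc] at hs
      have hs' := Set.mem_Icc_of_Ioo hs
      rw [(key s hs').deriv]
      have := hxDpos s hs'
      positivity
  intro t ht
  have h0 : (0:ℝ) ∈ Set.Icc (0:ℝ) T := Set.left_mem_Icc.mpr hT
  have := hmono h0 ht ht.1
  have hg0 : g 0 = 0 := by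
    simp [hg, hxD0, hxI0, mul_comm, mul_div_assoc, hμ.ne']
  rw [hg0] at this
  have hexp : 0 < Real.exp (γt * t) := Real.exp_pos _
  simp only [hg] at this
  nlinarith [this, hexp]
end
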